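/- The same infimum as in the interchange lemma is attained when restricting to β ∈ L^∞(Γ_σ): inf over bounded measurable β of ∫_0^1 [β(u) + (1-u)^{-1} E_π[(L-β(u))_+]] dΓ_σ(u) equals Γ_σ({0}) E_π[L] + ∫_{(0,1)} ES_{u,π}(L) dΓ_σ(u). -/

import Mathlib

open MeasureTheory Filter Set Topology
open scoped ENNReal NNReal

set_option linter.unusedSectionVars false
set_option linter.unusedVariables false
set_option maxHeartbeats 1000000


noncomputable def Phi {Ω : Type*} [MeasurableSpace Ω] (π : Measure Ω) (L : Ω → ℝ) (b : ℝ) : ℝ :=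
  ∫ ω, max (L ω - b) 0 ∂π

section A
variable {Ω : Type*} [MeasurableSpace Ω] (π : Measure Ω) [IsProbabilityMeasure π] (L : Ω → ℝ)

theorem phi_int (hL : Integrable L π) (b : ℝ) :
    Integrable (fun ω => max (L ω - b) 0) π :=
  (hL.sub (integrable_const b)).pos_part

theorem phi_nonneg (b : ℝ) : 0 ≤ Phi π L b :=
  integral_nonneg fun ω => le_max_right _ _

theorem phi_anti (hL : Integrable L π) {b b' : ℝ} (h : b ≤ b') : Phi π L b' ≤ Phi π L b :=
  integral_mono (phi_int π L hL b') (phi_int π L hL b) fun ω =>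
    max_le_max (by linarith) le_rfl

theorem phi_ge (hL : Integrable L π) (b : ℝ) : (∫ ω, L ω ∂π) - b ≤ Phi π L b := by
  have : (∫ ω, L ω ∂π) - b = ∫ ω, (L ω - b) ∂π := by
    rw [integral_sub hL (integrable_const b), integral_const]
    simp
  rw [this]
  exact integral_mono (hL.sub (integrable_const b)) (phi_int π L hL b) fun ω => le_max_left _ _

theorem phi_sub_le (hLmeas : Measurable L) (hL : Integrable L π) {b b' : ℝ} (h : b ≤ b') :
    Phi π L b - Phi π L b' ≤ (b' - b) * (π {ω | b < L ω}).toReal := by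
  have hs : MeasurableSet {ω | b < L ω} := measurableSet_lt measurable_const hLmeas
  have key : ∀ ω, max (L ω - b) 0 - max (L ω - b') 0 ≤
      Set.indicator {ω | b < L ω} (fun _ => b' - b) ω := by
    intro ω
    by_cases hω : b < L ω
    · rw [Set.indicator_of_mem (show ω ∈ {ω | b < L ω} from hω)]
      rcases le_total (L ω) b' with h1 | h1
      · have : max (L ω - b') 0 = 0 := max_eq_right (by linarith)
        rw [this]
        simp only [sub_zero]
        exact le_trans (max_le (by linarith) (by linarith)) le_rfl
      · rw [max_eq_left (by linarith : (0:ℝ) ≤ L ω - b), max_eq_left (by linarith)]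
        linarith
    · rw [Set.indicator_of_notMem (show ω ∉ {ω | b < L ω} from hω)]
      push_neg at hω
      have h1 : max (L ω - b) 0 = 0 := max_eq_right (by linarith)
      rw [h1]
      have := le_max_right (L ω - b') (0:ℝ)
      linarith
  have hind : Integrable (Set.indicator {ω | b < L ω} (fun _ => b' - b)) π :=
    (integrable_const (b' - b)).indicator hs
  calc Phi π L b - Phi π L b' = ∫ ω, (max (L ω - b) 0 - max (L ω - b') 0) ∂π := by
        rw [integral_sub (phi_int π L hL b) (phi_int π L hL b')]; rfl
    _ ≤ ∫ ω, Set.indicator {ω | b < L ω} (fun _ => b' - b) ω ∂π :=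
        integral_mono ((phi_int π L hL b).sub (phi_int π L hL b')) hind key
    _ = (b' - b) * (π {ω | b < L ω}).toReal := by
        rw [integral_indicator_const _ hs]; simp [mul_comm, measureReal_def]

theorem phi_sub_ge (hLmeas : Measurable L) (hL : Integrable L π) {b b' : ℝ} (h : b ≤ b') :
    (b' - b) * (π {ω | b' ≤ L ω}).toReal ≤ Phi π L b - Phi π L b' := by
  have hs : MeasurableSet {ω | b' ≤ L ω} := measurableSet_le measurable_const hLmeas
  have key : ∀ ω, Set.indicator {ω | b' ≤ L ω} (fun _ => b' - b) ω ≤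
      max (L ω - b) 0 - max (L ω - b') 0 := by
    intro ω
    by_cases hω : b' ≤ L ω
    · rw [Set.indicator_of_mem (show ω ∈ {ω | b' ≤ L ω} from hω), max_eq_left (by linarith : (0:ℝ) ≤ L ω - b),
        max_eq_left (by linarith : (0:ℝ) ≤ L ω - b')]
      linarith
    · rw [Set.indicator_of_notMem (show ω ∉ {ω | b' ≤ L ω} from hω)]
      push_neg at hω
      have h1 : max (L ω - b') 0 = 0 := max_eq_right (by linarith)
      rw [h1]
      have := le_max_right (L ω - b) (0:ℝ)
      linarith
  have hind : Integrable (Set.indicator {ω | b' ≤ L ω} (fun _ => b' - b)) π :=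
    (integrable_const (b' - b)).indicator hs
  calc (b' - b) * (π {ω | b' ≤ L ω}).toReal
      = ∫ ω, Set.indicator {ω | b' ≤ L ω} (fun _ => b' - b) ω ∂π := by
        rw [integral_indicator_const _ hs]; simp [mul_comm, measureReal_def]
    _ ≤ ∫ ω, (max (L ω - b) 0 - max (L ω - b') 0) ∂π :=
        integral_mono hind ((phi_int π L hL b).sub (phi_int π L hL b')) key
    _ = Phi π L b - Phi π L b' := by
        rw [integral_sub (phi_int π L hL b) (phi_int π L hL b')]; rfl

theorem meas_toReal_le_one (s : Set Ω) : (π s).toReal ≤ 1 := by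
  rw [← ENNReal.toReal_one]
  exact ENNReal.toReal_mono ENNReal.one_ne_top prob_le_one

theorem phi_cont (hLmeas : Measurable L) (hL : Integrable L π) : Continuous (Phi π L) := by
  have lip : LipschitzWith 1 (Phi π L) := by
    apply LipschitzWith.of_dist_le_mul
    intro x y
    rw [Real.dist_eq, Real.dist_eq, NNReal.coe_one, one_mul]
    wlog hxy : x ≤ y generalizing x y
    · rw [abs_sub_comm, abs_sub_comm x y]; exact this y x (le_of_not_ge hxy)
    have h1 : Phi π L y ≤ Phi π L x := phi_anti π L hL hxy
    have h2 : Phi π L x - Phi π L y ≤ (y - x) * (π {ω | x < L ω}).toReal :=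
      phi_sub_le π L hLmeas hL hxy
    have h3 : (π {ω | x < L ω}).toReal ≤ 1 := meas_toReal_le_one π _
    have h0 : 0 ≤ Phi π L x - Phi π L y := by linarith
    have habs : |x - y| = y - x := by rw [abs_sub_comm]; exact abs_of_nonneg (by linarith)
    rw [habs, abs_of_nonneg h0]
    nlinarith
  exact lip.continuous

end A
section B
variable {Ω : Type*} [MeasurableSpace Ω] (π : Measure Ω) [IsProbabilityMeasure π] (L : Ω → ℝ)

theorem phi_add_tendsto' (hL : Integrable L π) :
    Tendsto (fun n : ℕ => (-(n:ℝ)) + ∫ ω, max (L ω - (-(n:ℝ))) 0 ∂π) atTop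
      (𝓝 (∫ ω, L ω ∂π)) := by
  have key : ∀ n : ℕ, (-(n:ℝ)) + ∫ ω, max (L ω - (-(n:ℝ))) 0 ∂π
      = (∫ ω, L ω ∂π) + ∫ ω, max (-(n:ℝ) - L ω) 0 ∂π := by
    intro n
    have h1 : Integrable (fun ω => max (L ω - (-(n:ℝ))) 0) π :=
      (hL.sub (integrable_const _)).pos_part
    have h2 : Integrable (fun ω => max (-(n:ℝ) - L ω) 0) π :=
      ((integrable_const _).sub hL).pos_part
    have point : ∀ ω, max (L ω - (-(n:ℝ))) 0 = (L ω - (-(n:ℝ))) + max (-(n:ℝ) - L ω) 0 := by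
      intro ω
      rcases le_total (L ω) (-(n:ℝ)) with h | h
      · rw [max_eq_right (by linarith), max_eq_left (by linarith)]; ring
      · rw [max_eq_left (by linarith), max_eq_right (by linarith)]; ring
    calc (-(n:ℝ)) + ∫ ω, max (L ω - (-(n:ℝ))) 0 ∂π
        = (-(n:ℝ)) + ∫ ω, ((L ω - (-(n:ℝ))) + max (-(n:ℝ) - L ω) 0) ∂π := by
          congr 1; exact integral_congr_ae (Eventually.of_forall point)
      _ = (-(n:ℝ)) + ((∫ ω, (L ω - (-(n:ℝ))) ∂π) + ∫ ω, max (-(n:ℝ) - L ω) 0 ∂π) := by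
          have hsub : Integrable (fun ω => L ω - (-(n:ℝ))) π := hL.sub (integrable_const _)
          rw [integral_add hsub h2]
      _ = (∫ ω, L ω ∂π) + ∫ ω, max (-(n:ℝ) - L ω) 0 ∂π := by
          rw [integral_sub hL (integrable_const _), integral_const]
          simp; ring
  simp only [key]
  have : Tendsto (fun n : ℕ => ∫ ω, max (-(n:ℝ) - L ω) 0 ∂π) atTop (𝓝 0) := by
    have := MeasureTheory.tendsto_integral_of_dominated_convergence
      (F := fun (n:ℕ) ω => max (-(n:ℝ) - L ω) 0) (f := fun _ => (0:ℝ))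
      (bound := fun ω => max (-L ω) 0 + 1) (μ := π)
      (fun n => (((integrable_const _).sub hL).pos_part).aestronglyMeasurable)
      (by
        have h1 : Integrable (fun ω => max (-L ω) 0) π := hL.neg.pos_part
        exact h1.add (integrable_const 1))
      ?_ ?_
    · simpa using this
    · intro n
      filter_upwards with ω
      rw [Real.norm_eq_abs, abs_of_nonneg (le_max_right _ _)]
      rcases le_total (L ω) (-(n:ℝ)) with h | h
      · rw [max_eq_left (by linarith)]
        have : -L ω ≤ max (-L ω) 0 := le_max_left _ _
        have hn : (0:ℝ) ≤ n := Nat.cast_nonneg n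
        nlinarith [le_max_left (-L ω) (0:ℝ)]
      · rw [max_eq_right (by linarith)]
        positivity
    · filter_upwards with ω
      have : ∀ᶠ (n : ℕ) in atTop, max (-(n:ℝ) - L ω) 0 = 0 := by
        have hev : ∀ᶠ (n : ℕ) in atTop, (-L ω) ≤ (n:ℝ) := by
          obtain ⟨N, hN⟩ := exists_nat_ge (-L ω)
          filter_upwards [eventually_ge_atTop N] with n hn
          exact hN.trans (by exact_mod_cast hn)
        filter_upwards [hev] with n hn
        exact max_eq_right (by linarith)
      exact Tendsto.congr' (EventuallyEq.symm this) tendsto_const_nhds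
  have := Tendsto.add (tendsto_const_nhds (x := ∫ ω, L ω ∂π)) this
  simpa using this

end B

section Q
variable {Ω : Type*} [MeasurableSpace Ω] (π : Measure Ω) [IsProbabilityMeasure π] (L : Ω → ℝ)

noncomputable def qtl (π : Measure Ω) (L : Ω → ℝ) (u : ℝ) : ℝ :=
  sInf {x : ℝ | u ≤ (π {ω | L ω ≤ x}).toReal}

variable {u : ℝ}

theorem F_mono (hLmeas : Measurable L) {x y : ℝ} (h : x ≤ y) :
    (π {ω | L ω ≤ x}).toReal ≤ (π {ω | L ω ≤ y}).toReal :=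
  ENNReal.toReal_mono (measure_ne_top _ _) (measure_mono fun ω hω => le_trans hω h)

theorem qtl_set_nonempty (hLmeas : Measurable L) (hu : u < 1) :
    {x : ℝ | u ≤ (π {ω | L ω ≤ x}).toReal}.Nonempty := by
  have hmono : Monotone (fun n : ℕ => {ω | L ω ≤ (n:ℝ)}) := by
    intro m n hmn ω hω
    simp only [mem_setOf_eq] at *
    exact le_trans hω (by exact_mod_cast hmn)
  have hU : (⋃ n : ℕ, {ω | L ω ≤ (n:ℝ)}) = univ := by
    ext ω; simp only [mem_iUnion, mem_univ, iff_true, mem_setOf_eq]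
    obtain ⟨N, hN⟩ := exists_nat_ge (L ω)
    exact ⟨N, hN⟩
  have ht := tendsto_measure_iUnion_atTop (μ := π) hmono
  rw [hU, measure_univ] at ht
  have ht2 : Tendsto (fun n : ℕ => (π {ω | L ω ≤ (n:ℝ)}).toReal) atTop (𝓝 1) := by
    have := (ENNReal.tendsto_toReal (by simp : (1:ℝ≥0∞) ≠ ∞)).comp ht
    simpa [Function.comp_def] using this
  have : ∀ᶠ (n : ℕ) in atTop, u < (π {ω | L ω ≤ (n:ℝ)}).toReal :=
    ht2.eventually_const_lt hu
  obtain ⟨n, hn⟩ := this.exists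
  exact ⟨n, le_of_lt hn⟩

theorem qtl_set_bddBelow (hLmeas : Measurable L) (hu : 0 < u) :
    BddBelow {x : ℝ | u ≤ (π {ω | L ω ≤ x}).toReal} := by
  have hanti : Antitone (fun n : ℕ => {ω | L ω ≤ -(n:ℝ)}) := by
    intro m n hmn ω hω
    simp only [mem_setOf_eq] at *
    refine le_trans hω (by simp only [neg_le_neg_iff]; exact_mod_cast hmn)
  have hI : (⋂ n : ℕ, {ω | L ω ≤ -(n:ℝ)}) = ∅ := by
    ext ω; simp only [mem_iInter, mem_empty_iff_false, iff_false, mem_setOf_eq, not_forall]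
    obtain ⟨N, hN⟩ := exists_nat_ge (-L ω + 1)
    exact ⟨N, by push_neg; linarith⟩
  have ht := tendsto_measure_iInter_atTop (μ := π)
    (fun n => ((measurableSet_le hLmeas measurable_const)).nullMeasurableSet)
    hanti ⟨0, measure_ne_top _ _⟩
  rw [hI, measure_empty] at ht
  have ht2 : Tendsto (fun n : ℕ => (π {ω | L ω ≤ -(n:ℝ)}).toReal) atTop (𝓝 0) := by
    have := (ENNReal.tendsto_toReal (by simp : (0:ℝ≥0∞) ≠ ∞)).comp ht
    simpa [Function.comp_def] using this
  have : ∀ᶠ (n : ℕ) in atTop, (π {ω | L ω ≤ -(n:ℝ)}).toReal < u := ht2.eventually_lt_const hu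
  obtain ⟨n, hn⟩ := this.exists
  refine ⟨-(n:ℝ), fun y hy => ?_⟩
  by_contra hc
  push_neg at hc
  exact absurd (le_trans hy (F_mono π L hLmeas hc.le)) (not_le.mpr hn)

theorem qtl_F_ge (hLmeas : Measurable L) (hu0 : 0 < u) (hu1 : u < 1) :
    u ≤ (π {ω | L ω ≤ qtl π L u}).toReal := by
  set q := qtl π L u with hq
  have hne := qtl_set_nonempty π L hLmeas hu1
  have hbdd := qtl_set_bddBelow π L hLmeas hu0
  have step : ∀ n : ℕ, u ≤ (π {ω | L ω ≤ q + 1/(n+1)}).toReal := by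
    intro n
    have hlt : q < q + 1/(n+1) := lt_add_of_pos_right q (by positivity)
    obtain ⟨x, hx, hxlt⟩ := exists_lt_of_csInf_lt hne hlt
    exact le_trans hx (F_mono π L hLmeas hxlt.le)
  have hanti : Antitone (fun n : ℕ => {ω | L ω ≤ q + 1/(n+1)}) := by
    intro m n hmn ω hω
    simp only [mem_setOf_eq] at *
    have h' : 1/((n:ℝ)+1) ≤ 1/((m:ℝ)+1) := by
      apply one_div_le_one_div_of_le (by positivity)
      have : (m:ℝ) ≤ (n:ℝ) := by exact_mod_cast hmn
      linarith
    linarith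
  have hI : (⋂ n : ℕ, {ω | L ω ≤ q + 1/(n+1)}) = {ω | L ω ≤ q} := by
    ext ω
    simp only [mem_iInter, mem_setOf_eq]
    constructor
    · intro h
      by_contra hc
      push_neg at hc
      obtain ⟨N, hN⟩ := exists_nat_gt (1 / (L ω - q))
      have hpos : 0 < L ω - q := by linarith
      have h1 : 1 / (L ω - q) < (N:ℝ) + 1 := by
        have : (N:ℝ) ≤ (N:ℝ) + 1 := by linarith
        linarith
      have h2 : 1/((N:ℝ)+1) < L ω - q := by
        rw [div_lt_iff₀ (by positivity)] at h1
        rw [div_lt_iff₀ (by positivity)]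
        nlinarith
      have := h N
      linarith
    · intro h n
      have : (0:ℝ) < 1/((n:ℝ)+1) := by positivity
      linarith
  have ht := tendsto_measure_iInter_atTop (μ := π)
    (fun n => ((measurableSet_le hLmeas measurable_const)).nullMeasurableSet)
    hanti ⟨0, measure_ne_top _ _⟩
  rw [hI] at ht
  have ht2 : Tendsto (fun n : ℕ => (π {ω | L ω ≤ q + 1/(n+1)}).toReal) atTop
      (𝓝 (π {ω | L ω ≤ q}).toReal) := by
    have := (ENNReal.tendsto_toReal (measure_ne_top π _)).comp ht
    exact this
  exact ge_of_tendsto ht2 (Eventually.of_forall step)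

theorem qtl_F_lt (hLmeas : Measurable L) (hu0 : 0 < u) (hu1 : u < 1) :
    (π {ω | L ω < qtl π L u}).toReal ≤ u := by
  set q := qtl π L u with hq
  have hne := qtl_set_nonempty π L hLmeas hu1
  have hbdd := qtl_set_bddBelow π L hLmeas hu0
  have step : ∀ n : ℕ, (π {ω | L ω ≤ q - 1/(n+1)}).toReal < u := by
    intro n
    by_contra hc
    push_neg at hc
    have : q ≤ q - 1/(n+1) := csInf_le hbdd hc
    have hpos : (0:ℝ) < 1/((n:ℝ)+1) := by positivity
    linarith
  have hmono : Monotone (fun n : ℕ => {ω | L ω ≤ q - 1/(n+1)}) := by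
    intro m n hmn ω hω
    simp only [mem_setOf_eq] at *
    have h' : 1/((n:ℝ)+1) ≤ 1/((m:ℝ)+1) := by
      apply one_div_le_one_div_of_le (by positivity)
      have : (m:ℝ) ≤ (n:ℝ) := by exact_mod_cast hmn
      linarith
    linarith
  have hU : (⋃ n : ℕ, {ω | L ω ≤ q - 1/(n+1)}) = {ω | L ω < q} := by
    ext ω
    simp only [mem_iUnion, mem_setOf_eq]
    constructor
    · rintro ⟨n, hn⟩
      have : (0:ℝ) < 1/((n:ℝ)+1) := by positivity
      linarith
    · intro h
      obtain ⟨N, hN⟩ := exists_nat_gt (1 / (q - L ω))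
      have hpos : 0 < q - L ω := by linarith
      have h2 : 1/((N:ℝ)+1) < q - L ω := by
        have h1 : 1 / (q - L ω) < (N:ℝ) + 1 := by linarith
        rw [div_lt_iff₀ hpos] at h1
        rw [div_lt_iff₀ (by positivity)]
        nlinarith
      exact ⟨N, by linarith⟩
  have ht := tendsto_measure_iUnion_atTop (μ := π) hmono
  rw [hU] at ht
  have ht2 : Tendsto (fun n : ℕ => (π {ω | L ω ≤ q - 1/(n+1)}).toReal) atTop
      (𝓝 (π {ω | L ω < q}).toReal) := by
    exact (ENNReal.tendsto_toReal (measure_ne_top π _)).comp ht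
  exact le_of_tendsto ht2 (Eventually.of_forall fun n => (step n).le)

theorem qtl_mono (hLmeas : Measurable L) {u u' : ℝ} (hu0 : 0 < u) (huu' : u ≤ u') (hu1 : u' < 1) :
    qtl π L u ≤ qtl π L u' :=
  csInf_le_csInf (qtl_set_bddBelow π L hLmeas hu0)
    (qtl_set_nonempty π L hLmeas hu1)
    (fun x hx => le_trans huu' hx)

theorem qtl_gt_le (hLmeas : Measurable L) (hu0 : 0 < u) (hu1 : u < 1) :
    (π {ω | qtl π L u < L ω}).toReal ≤ 1 - u := by
  set q := qtl π L u
  have h1 : u ≤ (π {ω | L ω ≤ q}).toReal := qtl_F_ge π L hLmeas hu0 hu1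
  have hcompl : {ω | q < L ω} = {ω | L ω ≤ q}ᶜ := by
    ext ω; simp [not_le]
  rw [hcompl, prob_compl_eq_one_sub (measurableSet_le hLmeas measurable_const),
    ENNReal.toReal_sub_of_le prob_le_one ENNReal.one_ne_top]
  simp only [ENNReal.toReal_one]
  linarith

theorem qtl_ge_ge (hLmeas : Measurable L) (hu0 : 0 < u) (hu1 : u < 1) :
    1 - u ≤ (π {ω | qtl π L u ≤ L ω}).toReal := by
  set q := qtl π L u
  have h1 : (π {ω | L ω < q}).toReal ≤ u := qtl_F_lt π L hLmeas hu0 hu1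
  have hcompl : {ω | q ≤ L ω} = {ω | L ω < q}ᶜ := by
    ext ω; simp [not_lt]
  rw [hcompl, prob_compl_eq_one_sub (measurableSet_lt hLmeas measurable_const),
    ENNReal.toReal_sub_of_le prob_le_one ENNReal.one_ne_top]
  simp only [ENNReal.toReal_one]
  linarith

end Q
noncomputable def stld (σ : ℝ → ℝ) (M : ℝ) : ℝ → ℝ :=
  fun w => if w < 0 then σ 0 else if w < 1 then σ w else M

section D
variable {σ : ℝ → ℝ} {M : ℝ}

theorem stld_mono (hσ_mono : MonotoneOn σ (Ico (0:ℝ) 1))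
    (hM : ∀ u ∈ Ico (0:ℝ) 1, σ u ≤ M) : Monotone (stld σ M) := by
  intro x y hxy
  unfold stld
  rcases lt_or_ge x 0 with hx | hx
  · rw [if_pos hx]
    rcases lt_or_ge y 0 with hy | hy
    · rw [if_pos hy]
    · rw [if_neg (not_lt.mpr hy)]
      rcases lt_or_ge y 1 with hy1 | hy1
      · rw [if_pos hy1]
        exact hσ_mono ⟨le_refl 0, one_pos⟩ ⟨hy, hy1⟩ hy
      · rw [if_neg (not_lt.mpr hy1)]
        exact hM 0 ⟨le_refl 0, one_pos⟩
  · rw [if_neg (not_lt.mpr hx), if_neg (not_lt.mpr (le_trans hx hxy))]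
    rcases lt_or_ge x 1 with hx1 | hx1
    · rw [if_pos hx1]
      rcases lt_or_ge y 1 with hy1 | hy1
      · rw [if_pos hy1]; exact hσ_mono ⟨hx, hx1⟩ ⟨le_trans hx hxy, hy1⟩ hxy
      · rw [if_neg (not_lt.mpr hy1)]; exact hM x ⟨hx, hx1⟩
    · rw [if_neg (not_lt.mpr hx1), if_neg (not_lt.mpr (le_trans hx1 hxy))]

theorem stld_eq_on {w : ℝ} (hw : w ∈ Ico (0:ℝ) 1) : stld σ M w = σ w := by
  unfold stld
  rw [if_neg (not_lt.mpr hw.1), if_pos hw.2]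

theorem stld_le (hM : ∀ u ∈ Ico (0:ℝ) 1, σ u ≤ M) (hM0 : σ 0 ≤ M) (w : ℝ) :
    stld σ M w ≤ M := by
  unfold stld
  split_ifs with h1 h2
  · exact hM0
  · exact hM w ⟨not_lt.mp h1, h2⟩
  · exact le_rfl

theorem stld_nonneg (hσ_nonneg : ∀ u ∈ Ico (0:ℝ) 1, 0 ≤ σ u) (hM0 : 0 ≤ M) (w : ℝ) :
    0 ≤ stld σ M w := by
  unfold stld
  split_ifs with h1 h2
  · exact hσ_nonneg 0 ⟨le_rfl, one_pos⟩
  · exact hσ_nonneg w ⟨not_lt.mp h1, h2⟩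
  · exact hM0

theorem lint_sq {a : ℝ} (ha : a ∈ Ico (0:ℝ) 1) :
    ∫⁻ v in Ico (0:ℝ) a, ENNReal.ofReal (((1-v)^2)⁻¹) = ENNReal.ofReal ((1-a)⁻¹ - 1) := by
  have hderiv : ∀ x ∈ uIcc (0:ℝ) a, HasDerivAt (fun v => (1-v)⁻¹) (((1-x)^2)⁻¹) x := by
    intro x hx
    rw [uIcc_of_le ha.1] at hx
    have hne : (1:ℝ) - x ≠ 0 := by
      have : x < 1 := lt_of_le_of_lt hx.2 ha.2
      intro hc; linarith
    have h1 : HasDerivAt (fun v : ℝ => 1 - v) (-1) x := (hasDerivAt_id x).const_sub 1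
    have h2 := h1.inv hne
    rw [show ((1-x)^2)⁻¹ = - -1 / (1 - x) ^ 2 by ring]
    exact (h2 : HasDerivAt (fun v => (1-v)⁻¹) (- -1 / (1 - x) ^ 2) x)
  have hcont : ContinuousOn (fun x : ℝ => ((1-x)^2)⁻¹) (uIcc (0:ℝ) a) := by
    apply ContinuousOn.inv₀
    · fun_prop
    · intro x hx
      rw [uIcc_of_le ha.1] at hx
      have hlt : x < 1 := lt_of_le_of_lt hx.2 ha.2
      have hne : (1:ℝ) - x ≠ 0 := by intro hc; linarith
      exact pow_ne_zero 2 hne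
  have hii : IntervalIntegrable (fun x : ℝ => ((1-x)^2)⁻¹) volume 0 a :=
    hcont.intervalIntegrable
  have hftc := intervalIntegral.integral_eq_sub_of_hasDerivAt hderiv hii
  simp only [sub_zero, inv_one] at hftc
  have hioc : ∫ x in Ioc (0:ℝ) a, ((1-x)^2)⁻¹ = (1-a)⁻¹ - 1 := by
    rw [← intervalIntegral.integral_of_le ha.1]
    exact hftc
  have hint : IntegrableOn (fun x : ℝ => ((1-x)^2)⁻¹) (Ioc 0 a) volume := by
    rw [← intervalIntegrable_iff_integrableOn_Ioc_of_le ha.1]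
    exact hii
  have hnn : 0 ≤ᵐ[volume.restrict (Ioc (0:ℝ) a)] fun x : ℝ => ((1-x)^2)⁻¹ := by
    filter_upwards with x
    positivity
  have := MeasureTheory.ofReal_integral_eq_lintegral_ofReal hint hnn
  rw [hioc] at this
  rw [Measure.restrict_congr_set Ico_ae_eq_Ioc]
  exact this.symm


section E
variable {σ : ℝ → ℝ} {M : ℝ} (Γ : Measure ℝ) [IsProbabilityMeasure Γ]

theorem sigma_congr_int (hσ_mono : MonotoneOn σ (Ico (0:ℝ) 1))
    (hM : ∀ u ∈ Ico (0:ℝ) 1, σ u ≤ M) {a b : ℝ} (ha : 0 ≤ a) (hab : a ≤ b) (hb : b ≤ 1) :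
    ∫ w in a..b, σ w = ∫ w in a..b, stld σ M w := by
  apply intervalIntegral.integral_congr_ae
  have h1 : ∀ᵐ (w:ℝ) ∂volume, w ≠ 1 := by
    rw [ae_iff]
    have : {w : ℝ | ¬ w ≠ 1} = {1} := by ext w; simp
    rw [this]
    exact Real.volume_singleton
  filter_upwards [h1] with w hw1
  intro hw2
  rw [uIoc_of_le hab] at hw2
  have hw0 : 0 ≤ w := le_trans ha hw2.1.le
  have hwlt : w < 1 := lt_of_le_of_ne (le_trans hw2.2 hb) hw1
  rw [stld_eq_on ⟨hw0, hwlt⟩]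

theorem gamma_Ico_one (hΓ_supp : Γ (Ico (0:ℝ) 1)ᶜ = 0) : Γ (Ico (0:ℝ) 1) = 1 := by
  apply le_antisymm prob_le_one
  calc (1:ℝ≥0∞) = Γ univ := measure_univ.symm
    _ = Γ (Ico (0:ℝ) 1 ∪ (Ico (0:ℝ) 1)ᶜ) := by rw [union_compl_self]
    _ ≤ Γ (Ico (0:ℝ) 1) + Γ ((Ico (0:ℝ) 1)ᶜ) := measure_union_le _ _
    _ = Γ (Ico (0:ℝ) 1) := by rw [hΓ_supp, add_zero]

theorem gamma_tail (hσ_nonneg : ∀ u ∈ Ico (0:ℝ) 1, 0 ≤ σ u)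
    (hσ_mono : MonotoneOn σ (Ico (0:ℝ) 1))
    (hM : ∀ u ∈ Ico (0:ℝ) 1, σ u ≤ M)
    (hσ_one : ∫ u in (0:ℝ)..1, σ u = 1)
    (hΓ_supp : Γ (Ico (0:ℝ) 1)ᶜ = 0)
    (hΓ_cdf : ∀ u ∈ Ico (0:ℝ) 1,
      Γ (Icc 0 u) = ENNReal.ofReal ((1 - u) * σ u + ∫ v in (0:ℝ)..u, σ v))
    {v : ℝ} (hv : v ∈ Ico (0:ℝ) 1) :
    Γ (Ioo v 1) ≤ ENNReal.ofReal ((∫ w in v..1, stld σ M w) - (1-v) * stld σ M v) := by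
  have hsm : Monotone (stld σ M) := stld_mono hσ_mono hM
  have hdisj : Disjoint (Icc (0:ℝ) v) (Ioo v 1) := by
    apply Set.disjoint_left.mpr
    intro x hx hx2
    exact absurd hx2.1 (not_lt.mpr hx.2)
  have hunion : Icc (0:ℝ) v ∪ Ioo v 1 = Ico 0 1 := by
    ext x
    simp only [mem_union, mem_Icc, mem_Ioo, mem_Ico]
    constructor
    · rintro (⟨h1, h2⟩ | ⟨h1, h2⟩)
      · exact ⟨h1, lt_of_le_of_lt h2 hv.2⟩
      · exact ⟨le_trans hv.1 h1.le, h2⟩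
    · rintro ⟨h1, h2⟩
      rcases le_or_gt x v with h | h
      · exact Or.inl ⟨h1, h⟩
      · exact Or.inr ⟨h, h2⟩
  have hsum : Γ (Icc 0 v) + Γ (Ioo v 1) = 1 := by
    rw [← measure_union hdisj measurableSet_Ioo, hunion]
    exact gamma_Ico_one Γ hΓ_supp
  have hsplit : (∫ w in (0:ℝ)..v, stld σ M w) + ∫ w in v..1, stld σ M w = 1 := by
    rw [intervalIntegral.integral_add_adjacent_intervals
      (hsm.intervalIntegrable) (hsm.intervalIntegrable)]
    rw [← sigma_congr_int hσ_mono hM le_rfl zero_le_one le_rfl]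
    exact hσ_one
  have hFG : ((1-v) * σ v + ∫ w in (0:ℝ)..v, σ w)
      + ((∫ w in v..1, stld σ M w) - (1-v) * stld σ M v) = 1 := by
    have hsv : stld σ M v = σ v := stld_eq_on hv
    rw [sigma_congr_int hσ_mono hM le_rfl hv.1 (le_of_lt hv.2), hsv]
    linarith
  have h2 : (1:ℝ≥0∞) ≤ Γ (Icc 0 v)
      + ENNReal.ofReal ((∫ w in v..1, stld σ M w) - (1-v) * stld σ M v) := by
    rw [hΓ_cdf v hv]
    calc (1:ℝ≥0∞) = ENNReal.ofReal (((1-v) * σ v + ∫ w in (0:ℝ)..v, σ w)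
        + ((∫ w in v..1, stld σ M w) - (1-v) * stld σ M v)) := by
          rw [hFG, ENNReal.ofReal_one]
      _ ≤ _ := ENNReal.ofReal_add_le
  rw [← hsum] at h2
  exact (ENNReal.add_le_add_iff_left (measure_ne_top Γ _)).mp h2


noncomputable def cf (v : ℝ) : ℝ≥0∞ := ENNReal.ofReal (((1-v)^2)⁻¹)

noncomputable def e3f (s : ℝ → ℝ) (v w y : ℝ) : ℝ≥0∞ :=
  if v < w ∧ w ≤ 1 ∧ s v ≤ y ∧ y < s w then 1 else 0

noncomputable def H2f (s : ℝ → ℝ) (p : ℝ × ℝ) : ℝ≥0∞ :=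
  {q : ℝ × ℝ | q.1 ∈ Ico (0:ℝ) 1}.indicator
    (fun q => cf q.1 * ∫⁻ w, e3f s q.1 w q.2 ∂(volume : Measure ℝ)) p

theorem cf_meas : Measurable cf := by
  unfold cf
  fun_prop

theorem e3f_meas_pair {s : ℝ → ℝ} (hs : Measurable s) :
    Measurable (fun q : (ℝ × ℝ) × ℝ => e3f s q.1.1 q.2 q.1.2) := by
  unfold e3f
  apply Measurable.ite _ measurable_const measurable_const
  have h1 : MeasurableSet {q : (ℝ × ℝ) × ℝ | q.1.1 < q.2} :=
    measurableSet_lt (measurable_fst.comp measurable_fst) measurable_snd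
  have h2 : MeasurableSet {q : (ℝ × ℝ) × ℝ | q.2 ≤ 1} :=
    measurableSet_le measurable_snd measurable_const
  have h3 : MeasurableSet {q : (ℝ × ℝ) × ℝ | s q.1.1 ≤ q.1.2} :=
    measurableSet_le (hs.comp (measurable_fst.comp measurable_fst))
      (measurable_snd.comp measurable_fst)
  have h4 : MeasurableSet {q : (ℝ × ℝ) × ℝ | q.1.2 < s q.2} :=
    measurableSet_lt (measurable_snd.comp measurable_fst) (hs.comp measurable_snd)
  have : {a : (ℝ × ℝ) × ℝ | a.1.1 < a.2 ∧ a.2 ≤ 1 ∧ s a.1.1 ≤ a.1.2 ∧ a.1.2 < s a.2}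
      = {q : (ℝ × ℝ) × ℝ | q.1.1 < q.2} ∩ ({q | q.2 ≤ 1} ∩ ({q | s q.1.1 ≤ q.1.2}
        ∩ {q | q.1.2 < s q.2})) := by
    ext q; simp only [mem_setOf_eq, mem_inter_iff] <;> tauto
  rw [this]
  exact h1.inter (h2.inter (h3.inter h4))

theorem e3f_meas_fix {s : ℝ → ℝ} (hs : Measurable s) (v : ℝ) :
    Measurable (fun p : ℝ × ℝ => e3f s v p.1 p.2) := by
  exact (e3f_meas_pair hs).comp
    (show Measurable fun p : ℝ × ℝ => ((v, p.2), p.1) by fun_prop)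

theorem H2f_meas {s : ℝ → ℝ} (hs : Measurable s) : Measurable (H2f s) := by
  unfold H2f
  apply Measurable.indicator
  · apply Measurable.mul
    · exact cf_meas.comp measurable_fst
    · exact Measurable.lintegral_prod_right' (e3f_meas_pair hs)
  · exact measurable_fst (measurableSet_Ico)


theorem stld_ge_zero {σ : ℝ → ℝ} {M : ℝ} (hσ_mono : MonotoneOn σ (Ico (0:ℝ) 1))
    (hM : ∀ u ∈ Ico (0:ℝ) 1, σ u ≤ M) {v : ℝ} (hv : 0 ≤ v) :
    σ 0 ≤ stld σ M v := by
  have h0 : stld σ M 0 = σ 0 := stld_eq_on ⟨le_rfl, one_pos⟩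
  rw [← h0]
  exact stld_mono hσ_mono hM hv

theorem H2f_bound {σ : ℝ → ℝ} {M : ℝ}
    (hσ_nonneg : ∀ u ∈ Ico (0:ℝ) 1, 0 ≤ σ u)
    (hσ_mono : MonotoneOn σ (Ico (0:ℝ) 1))
    (hM : ∀ u ∈ Ico (0:ℝ) 1, σ u ≤ M) (y : ℝ) :
    (∫⁻ v, H2f (stld σ M) (v, y) ∂volume)
      ≤ (Ico (σ 0) M).indicator (fun _ => (1:ℝ≥0∞)) y := by
  have hM0 : σ 0 ≤ M := hM 0 ⟨le_rfl, one_pos⟩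
  set s := stld σ M with hsdef
  have hsm : Monotone s := stld_mono hσ_mono hM
  have hsle : ∀ w, s w ≤ M := stld_le hM hM0
  by_cases hy : σ 0 ≤ y ∧ y < M
  · -- main case
    have hne : ({t : ℝ | y < s t}).Nonempty := by
      refine ⟨1, ?_⟩
      have : s 1 = M := by
        simp only [hsdef, stld]
        rw [if_neg (by norm_num), if_neg (by norm_num)]
      simpa [this] using hy.2
    have hlb : ∀ t ∈ {t : ℝ | y < s t}, (0:ℝ) ≤ t := by
      intro t ht
      by_contra hc
      push_neg at hc
      have : s t = σ 0 := by simp only [hsdef, stld]; rw [if_pos hc]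
      rw [mem_setOf_eq, this] at ht
      linarith [hy.1]
    have hbdd : BddBelow {t : ℝ | y < s t} := ⟨0, hlb⟩
    set cy := sInf {t : ℝ | y < s t} with hcy
    have hcy0 : 0 ≤ cy := le_csInf hne hlb
    have hcy1 : cy ≤ 1 := csInf_le hbdd (by
      have : s 1 = M := by
        simp only [hsdef, stld]; rw [if_neg (by norm_num), if_neg (by norm_num)]
      simpa [mem_setOf_eq, this] using hy.2)
    have hvle : ∀ v, s v ≤ y → v ≤ cy := by
      intro v hv
      apply le_csInf hne
      intro t ht
      by_contra hc
      push_neg at hc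
      have : s t ≤ s v := hsm hc.le
      rw [mem_setOf_eq] at ht
      linarith
    have hwge : ∀ w, y < s w → cy ≤ w := fun w hw => csInf_le hbdd hw
    -- pointwise bound in v
    have hpt : ∀ v, H2f s (v, y)
        ≤ (Icc (0:ℝ) cy).indicator cf v * ENNReal.ofReal (1 - cy) := by
      intro v
      unfold H2f
      by_cases hv : v ∈ Ico (0:ℝ) 1
      · rw [indicator_of_mem (show (v,y) ∈ {q : ℝ × ℝ | q.1 ∈ Ico (0:ℝ) 1} from hv)]
        by_cases hsv : s v ≤ y
        · have hvcy : v ∈ Icc (0:ℝ) cy := ⟨hv.1, hvle v hsv⟩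
          rw [indicator_of_mem hvcy]
          apply mul_le_mul_right _ _
          have hle : ∀ w, e3f s v w y ≤ (Icc cy 1).indicator (fun _ => (1:ℝ≥0∞)) w := by
            intro w
            unfold e3f
            split_ifs with h
            · rw [indicator_of_mem (show w ∈ Icc cy 1 from ⟨hwge w h.2.2.2, h.2.1⟩)]
            · exact zero_le
          calc (∫⁻ w, e3f s v w y ∂volume)
              ≤ ∫⁻ w, (Icc cy 1).indicator (fun _ => (1:ℝ≥0∞)) w ∂volume :=
                lintegral_mono hle
            _ = volume (Icc cy 1) := lintegral_indicator_one measurableSet_Icc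
            _ = ENNReal.ofReal (1 - cy) := Real.volume_Icc
        · have he : ∀ w, e3f s v w y = 0 := by
            intro w
            unfold e3f
            rw [if_neg]
            rintro ⟨_, _, h3, _⟩
            exact hsv h3
          have : (∫⁻ w, e3f s v w y ∂volume) = 0 := by
            simp only [he]; exact lintegral_zero
          rw [this, mul_zero]
          exact zero_le
      · rw [indicator_of_notMem (show (v,y) ∉ {q : ℝ × ℝ | q.1 ∈ Ico (0:ℝ) 1} from hv)]
        exact zero_le
    calc (∫⁻ v, H2f s (v, y) ∂volume)
        ≤ ∫⁻ v, (Icc (0:ℝ) cy).indicator cf v * ENNReal.ofReal (1 - cy) ∂volume :=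
          lintegral_mono hpt
      _ = (∫⁻ v, (Icc (0:ℝ) cy).indicator cf v ∂volume) * ENNReal.ofReal (1 - cy) :=
          lintegral_mul_const' _ _ ENNReal.ofReal_ne_top
      _ ≤ (Ico (σ 0) M).indicator (fun _ => (1:ℝ≥0∞)) y := by
          rw [indicator_of_mem (show y ∈ Ico (σ 0) M from ⟨hy.1, hy.2⟩)]
          rcases eq_or_lt_of_le hcy1 with hcy1' | hcy1'
          · rw [hcy1', sub_self, ENNReal.ofReal_zero, mul_zero]
            exact zero_le
          · have hIcc : (∫⁻ v, (Icc (0:ℝ) cy).indicator cf v ∂volume)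
                = ENNReal.ofReal ((1-cy)⁻¹ - 1) := by
              rw [lintegral_indicator measurableSet_Icc,
                ← Measure.restrict_congr_set Ico_ae_eq_Icc]
              exact lint_sq ⟨hcy0, hcy1'⟩
            rw [hIcc, ← ENNReal.ofReal_mul (by
              have h1cy : (0:ℝ) < 1 - cy := by linarith
              have : (1:ℝ) ≤ (1-cy)⁻¹ := by
                have h2 := one_div_le_one_div_of_le h1cy (by linarith : 1 - cy ≤ 1)
                simpa [one_div] using h2
              linarith)]
            have : ((1-cy)⁻¹ - 1) * (1 - cy) = cy := by
              have h1cy : (1:ℝ) - cy ≠ 0 := by intro hc; linarith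
              field_simp
              ring
            rw [this]
            exact ENNReal.ofReal_le_one.mpr hcy1
  · -- degenerate case : integrand vanishes
    have hzero : ∀ v, H2f s (v, y) = 0 := by
      intro v
      unfold H2f
      by_cases hv : v ∈ Ico (0:ℝ) 1
      · rw [indicator_of_mem (show (v,y) ∈ {q : ℝ × ℝ | q.1 ∈ Ico (0:ℝ) 1} from hv)]
        have he : ∀ w, e3f s v w y = 0 := by
          intro w
          unfold e3f
          rw [if_neg]
          rintro ⟨_, _, h3, h4⟩
          apply hy
          constructor
          · exact le_trans (stld_ge_zero hσ_mono hM hv.1) h3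
          · exact lt_of_lt_of_le h4 (hsle w)
        simp only [he]
        rw [lintegral_zero, mul_zero]
      · exact indicator_of_notMem (show (v,y) ∉ {q : ℝ × ℝ | q.1 ∈ Ico (0:ℝ) 1} from hv) _
    simp only [hzero]
    rw [lintegral_zero]
    exact zero_le


theorem gamma_inv_le {σ : ℝ → ℝ} {M : ℝ} (Γ : Measure ℝ) [IsProbabilityMeasure Γ]
    (hσ_nonneg : ∀ u ∈ Ico (0:ℝ) 1, 0 ≤ σ u)
    (hσ_mono : MonotoneOn σ (Ico (0:ℝ) 1))
    (hM : ∀ u ∈ Ico (0:ℝ) 1, σ u ≤ M)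
    (hσ_one : ∫ u in (0:ℝ)..1, σ u = 1)
    (hΓ_supp : Γ (Ico (0:ℝ) 1)ᶜ = 0)
    (hΓ_cdf : ∀ u ∈ Ico (0:ℝ) 1,
      Γ (Icc 0 u) = ENNReal.ofReal ((1 - u) * σ u + ∫ v in (0:ℝ)..u, σ v)) :
    ∫⁻ u in Ico (0:ℝ) 1, ENNReal.ofReal ((1-u)⁻¹) ∂Γ ≤ 1 + ENNReal.ofReal M := by
  have hM0 : σ 0 ≤ M := hM 0 ⟨le_rfl, one_pos⟩
  have h00 : (0:ℝ) ≤ σ 0 := hσ_nonneg 0 ⟨le_rfl, one_pos⟩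
  set s := stld σ M with hsdef
  have hsm : Monotone s := stld_mono hσ_mono hM
  have hsmeas : Measurable s := hsm.measurable
  have hk : ∀ u ∈ Ico (0:ℝ) 1, ENNReal.ofReal ((1-u)⁻¹)
      = 1 + ∫⁻ v, (Ico (0:ℝ) u).indicator cf v ∂volume := by
    intro u hu
    have hIco : (∫⁻ v, (Ico (0:ℝ) u).indicator cf v ∂volume)
        = ENNReal.ofReal ((1-u)⁻¹ - 1) := by
      rw [lintegral_indicator measurableSet_Ico]
      exact lint_sq hu
    rw [hIco]
    have h01 : (0:ℝ) < 1 - u := by linarith [hu.2]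
    have h1u : (1:ℝ) ≤ (1-u)⁻¹ := by
      have h2 := one_div_le_one_div_of_le h01 (by linarith [hu.1] : 1 - u ≤ 1)
      simpa [one_div] using h2
    rw [← ENNReal.ofReal_one, ← ENNReal.ofReal_add (by norm_num) (by linarith)]
    congr 1
    ring
  have step1 : ∫⁻ u in Ico (0:ℝ) 1, ENNReal.ofReal ((1-u)⁻¹) ∂Γ
      = ∫⁻ u in Ico (0:ℝ) 1, (1 + ∫⁻ v, (Ico (0:ℝ) u).indicator cf v ∂volume) ∂Γ :=
    setLIntegral_congr_fun measurableSet_Ico hk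
  have step2 : ∫⁻ u in Ico (0:ℝ) 1, (1 + ∫⁻ v, (Ico (0:ℝ) u).indicator cf v ∂volume) ∂Γ
      = 1 + ∫⁻ u in Ico (0:ℝ) 1, (∫⁻ v, (Ico (0:ℝ) u).indicator cf v ∂volume) ∂Γ := by
    rw [lintegral_add_left measurable_const]
    congr 1
    rw [setLIntegral_one]
    exact gamma_Ico_one Γ hΓ_supp
  have hkmeas : Measurable (fun p : ℝ × ℝ => (Ico (0:ℝ) p.1).indicator cf p.2) := by
    have heq : (fun p : ℝ × ℝ => (Ico (0:ℝ) p.1).indicator cf p.2)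
        = {p : ℝ × ℝ | 0 ≤ p.2 ∧ p.2 < p.1}.indicator (fun p => cf p.2) := by
      funext p
      rw [indicator_apply, indicator_apply]
      simp only [mem_Ico, mem_setOf_eq]
    rw [heq]
    exact (cf_meas.comp measurable_snd).indicator
      ((measurableSet_le measurable_const measurable_snd).inter
        (measurableSet_lt measurable_snd measurable_fst))
  have step3 : ∫⁻ u in Ico (0:ℝ) 1, (∫⁻ v, (Ico (0:ℝ) u).indicator cf v ∂volume) ∂Γ
      = ∫⁻ v, (∫⁻ u in Ico (0:ℝ) 1, (Ico (0:ℝ) u).indicator cf v ∂Γ) ∂volume :=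
    lintegral_lintegral_swap hkmeas.aemeasurable
  have step4 : ∀ v, (∫⁻ u in Ico (0:ℝ) 1, (Ico (0:ℝ) u).indicator cf v ∂Γ)
      = (Ico (0:ℝ) 1).indicator (fun v => cf v * Γ (Ioo v 1)) v := by
    intro v
    by_cases hv0 : 0 ≤ v
    · have heq : ∀ u, (Ico (0:ℝ) u).indicator cf v = (Ioi v).indicator (fun _ => cf v) u := by
        intro u
        rw [indicator_apply, indicator_apply]
        simp only [mem_Ico, mem_Ioi]
        by_cases h : v < u
        · rw [if_pos ⟨hv0, h⟩, if_pos h]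
        · rw [if_neg (fun hc => h hc.2), if_neg h]
      calc (∫⁻ u in Ico (0:ℝ) 1, (Ico (0:ℝ) u).indicator cf v ∂Γ)
          = ∫⁻ u in Ico (0:ℝ) 1, (Ioi v).indicator (fun _ => cf v) u ∂Γ :=
            lintegral_congr fun u => heq u
        _ = cf v * (Γ.restrict (Ico 0 1)) (Ioi v) :=
            lintegral_indicator_const measurableSet_Ioi _
        _ = cf v * Γ (Ioi v ∩ Ico 0 1) := by rw [Measure.restrict_apply measurableSet_Ioi]
        _ = (Ico (0:ℝ) 1).indicator (fun v => cf v * Γ (Ioo v 1)) v := by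
            by_cases hv1 : v < 1
            · have hint : Ioi v ∩ Ico (0:ℝ) 1 = Ioo v 1 := by
                ext x
                simp only [mem_inter_iff, mem_Ioi, mem_Ico, mem_Ioo]
                constructor
                · rintro ⟨h1, _, h3⟩; exact ⟨h1, h3⟩
                · rintro ⟨h1, h2⟩; exact ⟨h1, le_trans hv0 h1.le, h2⟩
              rw [hint, indicator_of_mem (show v ∈ Ico (0:ℝ) 1 from ⟨hv0, hv1⟩)]
            · have hint : Ioi v ∩ Ico (0:ℝ) 1 = ∅ := by
                ext x
                simp only [mem_inter_iff, mem_Ioi, mem_Ico, mem_empty_iff_false, iff_false]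
                rintro ⟨h1, _, h3⟩
                push_neg at hv1
                linarith
              rw [hint, measure_empty, mul_zero,
                indicator_of_notMem (show v ∉ Ico (0:ℝ) 1 from fun hm => hv1 hm.2)]
    · have heq : ∀ u, (Ico (0:ℝ) u).indicator cf v = 0 := by
        intro u; exact indicator_of_notMem (fun hm => hv0 hm.1) _
      rw [indicator_of_notMem (show v ∉ Ico (0:ℝ) 1 from fun hm => hv0 hm.1)]
      calc (∫⁻ u in Ico (0:ℝ) 1, (Ico (0:ℝ) u).indicator cf v ∂Γ)
          = ∫⁻ u in Ico (0:ℝ) 1, 0 ∂Γ := lintegral_congr fun u => heq u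
        _ = 0 := lintegral_zero
  have hyint : ∀ v w, (∫⁻ y, e3f s v w y ∂volume)
      = (Ioc v 1).indicator (fun w => ENNReal.ofReal (s w - s v)) w := by
    intro v w
    by_cases h : v < w ∧ w ≤ 1
    · have heq : ∀ y, e3f s v w y = (Ico (s v) (s w)).indicator (fun _ => (1:ℝ≥0∞)) y := by
        intro y
        unfold e3f
        rw [indicator_apply]
        simp only [mem_Ico]
        by_cases hy : s v ≤ y ∧ y < s w
        · rw [if_pos ⟨h.1, h.2, hy.1, hy.2⟩, if_pos hy]
        · rw [if_neg (fun hc => hy ⟨hc.2.2.1, hc.2.2.2⟩), if_neg hy]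
      rw [lintegral_congr heq,
        show (∫⁻ y, (Ico (s v) (s w)).indicator (fun _ => (1:ℝ≥0∞)) y ∂volume)
          = volume (Ico (s v) (s w)) from lintegral_indicator_one measurableSet_Ico,
        Real.volume_Ico, indicator_of_mem (show w ∈ Ioc v 1 from ⟨h.1, h.2⟩)]
    · have heq : ∀ y, e3f s v w y = 0 := by
        intro y; unfold e3f; rw [if_neg (fun hc => h ⟨hc.1, hc.2.1⟩)]
      rw [lintegral_congr heq, lintegral_zero,
        indicator_of_notMem (show w ∉ Ioc v 1 from fun hc => h ⟨hc.1, hc.2⟩)]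
  have hG : ∀ v ∈ Ico (0:ℝ) 1, (∫⁻ w, ∫⁻ y, e3f s v w y ∂volume ∂volume)
      = ENNReal.ofReal ((∫ w in v..1, s w) - (1-v) * s v) := by
    intro v hv
    rw [lintegral_congr (fun w => hyint v w), lintegral_indicator measurableSet_Ioc]
    have hInt : IntegrableOn (fun w => s w - s v) (Ioc v 1) volume := by
      apply Integrable.sub
      · exact (hsm.intervalIntegrable).1
      · exact integrableOn_const measure_Ioc_lt_top.ne
    have hnn2 : 0 ≤ᵐ[volume.restrict (Ioc v 1)] fun w => s w - s v := by
      filter_upwards [ae_restrict_mem measurableSet_Ioc] with w hw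
      have := hsm hw.1.le
      simp only [Pi.zero_apply]
      linarith
    have hor := MeasureTheory.ofReal_integral_eq_lintegral_ofReal hInt hnn2
    rw [← hor]
    congr 1
    rw [← intervalIntegral.integral_of_le hv.2.le,
      intervalIntegral.integral_sub (hsm.intervalIntegrable) intervalIntegrable_const,
      intervalIntegral.integral_const, smul_eq_mul]
  have step5 : ∫⁻ v, (Ico (0:ℝ) 1).indicator (fun v => cf v * Γ (Ioo v 1)) v ∂volume
      ≤ ∫⁻ v, (Ico (0:ℝ) 1).indicator
          (fun v => cf v * (∫⁻ w, ∫⁻ y, e3f s v w y ∂volume ∂volume)) v ∂volume := by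
    apply lintegral_mono
    intro v
    by_cases hv : v ∈ Ico (0:ℝ) 1
    · rw [indicator_of_mem hv, indicator_of_mem hv]
      apply mul_le_mul_right
      calc Γ (Ioo v 1) ≤ ENNReal.ofReal ((∫ w in v..1, s w) - (1-v) * s v) :=
            gamma_tail Γ hσ_nonneg hσ_mono hM hσ_one hΓ_supp hΓ_cdf hv
        _ = ∫⁻ w, ∫⁻ y, e3f s v w y ∂volume ∂volume := (hG v hv).symm
    · rw [indicator_of_notMem hv, indicator_of_notMem hv]
  have hswapwy : ∀ v, (∫⁻ w, ∫⁻ y, e3f s v w y ∂volume ∂volume)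
      = ∫⁻ y, ∫⁻ w, e3f s v w y ∂volume ∂volume :=
    fun v => lintegral_lintegral_swap (e3f_meas_fix hsmeas v).aemeasurable
  have step6 : ∀ v, (Ico (0:ℝ) 1).indicator
      (fun v => cf v * (∫⁻ w, ∫⁻ y, e3f s v w y ∂volume ∂volume)) v
      = ∫⁻ y, H2f s (v, y) ∂volume := by
    intro v
    by_cases hv : v ∈ Ico (0:ℝ) 1
    · rw [indicator_of_mem hv, hswapwy v,
        ← lintegral_const_mul' _ _ (show cf v ≠ ⊤ by unfold cf; exact ENNReal.ofReal_ne_top)]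
      apply lintegral_congr
      intro y
      unfold H2f
      rw [indicator_of_mem (show (v,y) ∈ {q : ℝ × ℝ | q.1 ∈ Ico (0:ℝ) 1} from hv)]
    · rw [indicator_of_notMem hv]
      symm
      have hz : ∀ y, H2f s (v, y) = 0 := fun y =>
        indicator_of_notMem (show (v,y) ∉ {q : ℝ × ℝ | q.1 ∈ Ico (0:ℝ) 1} from hv) _
      simp only [hz]
      exact lintegral_zero
  have step7 : ∫⁻ v, (∫⁻ y, H2f s (v, y) ∂volume) ∂volume
      = ∫⁻ y, (∫⁻ v, H2f s (v, y) ∂volume) ∂volume :=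
    lintegral_lintegral_swap (H2f_meas hsmeas).aemeasurable
  have step8 : ∫⁻ y, (∫⁻ v, H2f s (v, y) ∂volume) ∂volume ≤ ENNReal.ofReal M := by
    calc ∫⁻ y, (∫⁻ v, H2f s (v, y) ∂volume) ∂volume
        ≤ ∫⁻ y, (Ico (σ 0) M).indicator (fun _ => (1:ℝ≥0∞)) y ∂volume :=
          lintegral_mono (H2f_bound hσ_nonneg hσ_mono hM)
      _ = volume (Ico (σ 0) M) := lintegral_indicator_one measurableSet_Ico
      _ = ENNReal.ofReal (M - σ 0) := Real.volume_Ico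
      _ ≤ ENNReal.ofReal M := ENNReal.ofReal_le_ofReal (by linarith)
  rw [step1, step2]
  apply add_le_add_right
  rw [step3]
  calc ∫⁻ v, (∫⁻ u in Ico (0:ℝ) 1, (Ico (0:ℝ) u).indicator cf v ∂Γ) ∂volume
      = ∫⁻ v, (Ico (0:ℝ) 1).indicator (fun v => cf v * Γ (Ioo v 1)) v ∂volume :=
        lintegral_congr step4
    _ ≤ ∫⁻ v, (Ico (0:ℝ) 1).indicator
          (fun v => cf v * (∫⁻ w, ∫⁻ y, e3f s v w y ∂volume ∂volume)) v ∂volume := step5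
    _ = ∫⁻ v, (∫⁻ y, H2f s (v, y) ∂volume) ∂volume := lintegral_congr step6
    _ = ∫⁻ y, (∫⁻ v, H2f s (v, y) ∂volume) ∂volume := step7
    _ ≤ ENNReal.ofReal M := step8

end E
end D
theorem stmt_8 {Ω : Type*} [MeasurableSpace Ω] (π : Measure Ω) [IsProbabilityMeasure π]
    (L : Ω → ℝ) (hLmeas : Measurable L) (hL : Integrable L π)
    -- the spectral function σ : bounded, nonnegative, increasing, ∫σ = 1
    (σ : ℝ → ℝ)
    (hσ_nonneg : ∀ u ∈ Set.Ico (0:ℝ) 1, 0 ≤ σ u)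
    (hσ_mono : MonotoneOn σ (Set.Ico (0:ℝ) 1))
    (hσ_bdd : ∃ M, ∀ u ∈ Set.Ico (0:ℝ) 1, σ u ≤ M)
    (hσ_one : ∫ u in (0:ℝ)..1, σ u = 1)
    -- Γ_σ : the probability measure on [0,1) with distribution function (1-u)σ(u) + ∫_0^u σ(v)dv
    (Γ : Measure ℝ) [IsProbabilityMeasure Γ]
    (hΓ_supp : Γ (Set.Ico (0:ℝ) 1)ᶜ = 0)
    (hΓ_cdf : ∀ u ∈ Set.Ico (0:ℝ) 1,
      Γ (Set.Icc 0 u) = ENNReal.ofReal ((1 - u) * σ u + ∫ v in (0:ℝ)..u, σ v))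
    -- ES_{u,π}(L) = inf_b (b + (1-u)^{-1} E_π[(L-b)_+]), with ES_{0,π}(L) = E_π[L]
    (ES : ℝ → ℝ)
    (hES : ∀ u, ES u =
      sInf (Set.range fun b : ℝ => b + (1 - u)⁻¹ * ∫ ω, max (L ω - b) 0 ∂π)) :
    -- interchange of infimum and integral
    -- the infimum restricted to bounded measurable β has the same value
    sInf {r : ℝ | ∃ β : ℝ → ℝ, Measurable β ∧ (∃ M : ℝ, ∀ u, |β u| ≤ M) ∧
        r = ∫ u, (β u + (1 - u)⁻¹ * ∫ ω, max (L ω - β u) 0 ∂π) ∂Γ}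
      = (Γ {(0:ℝ)}).toReal * (∫ ω, L ω ∂π) + ∫ u in ({(0:ℝ)}ᶜ), ES u ∂Γ := by
  classical
  obtain ⟨M₀, hM₀⟩ := hσ_bdd
  set M := max M₀ 0 with hMdef
  have hM : ∀ u ∈ Ico (0:ℝ) 1, σ u ≤ M := fun u hu => le_trans (hM₀ u hu) (le_max_left _ _)
  set EL := ∫ ω, L ω ∂π with hELdef
  set q := qtl π L with hqdef
  have hinv_pos : ∀ u : ℝ, u ∈ Ico (0:ℝ) 1 → (0:ℝ) < (1-u)⁻¹ := by
    intro u hu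
    have : (0:ℝ) < 1 - u := by linarith [hu.2]
    positivity
  have hinv_ge1 : ∀ u : ℝ, u ∈ Ico (0:ℝ) 1 → (1:ℝ) ≤ (1-u)⁻¹ := by
    intro u hu
    have h01 : (0:ℝ) < 1 - u := by linarith [hu.2]
    have h2 := one_div_le_one_div_of_le h01 (by linarith [hu.1] : 1 - u ≤ 1)
    simpa [one_div] using h2
  have g_ge : ∀ u ∈ Ico (0:ℝ) 1, ∀ b : ℝ, EL ≤ b + (1-u)⁻¹ * Phi π L b := by
    intro u hu b
    have h1 : Phi π L b ≤ (1-u)⁻¹ * Phi π L b := by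
      nlinarith [phi_nonneg π L b, hinv_ge1 u hu]
    have h2 := phi_ge π L hL b
    rw [hELdef]
    linarith
  have gA : ∀ u ∈ Ico (0:ℝ) 1, ∀ b b' : ℝ, b ≤ b' →
      (π {ω | b < L ω}).toReal ≤ 1 - u →
      b + (1-u)⁻¹ * Phi π L b ≤ b' + (1-u)⁻¹ * Phi π L b' := by
    intro u hu b b' hbb hπ
    have h01 : (0:ℝ) < 1 - u := by linarith [hu.2]
    have h1 : Phi π L b - Phi π L b' ≤ (b' - b) * (1 - u) := by
      have := phi_sub_le π L hLmeas hL hbb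
      nlinarith [ENNReal.toReal_nonneg (a := π {ω | b < L ω})]
    have h2 : (1-u)⁻¹ * (Phi π L b - Phi π L b') ≤ b' - b := by
      have h3 : (1-u)⁻¹ * (Phi π L b - Phi π L b') ≤ (1-u)⁻¹ * ((b' - b) * (1 - u)) :=
        mul_le_mul_of_nonneg_left h1 (by positivity)
      have h4 : (1-u)⁻¹ * ((b' - b) * (1 - u)) = b' - b := by
        field_simp
      linarith
    have h5 : (1-u)⁻¹ * Phi π L b - (1-u)⁻¹ * Phi π L b' ≤ b' - b := by
      rw [← mul_sub]; exact h2
    linarith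
  have gB : ∀ u ∈ Ico (0:ℝ) 1, ∀ b b' : ℝ, b ≤ b' →
      1 - u ≤ (π {ω | b' ≤ L ω}).toReal →
      b' + (1-u)⁻¹ * Phi π L b' ≤ b + (1-u)⁻¹ * Phi π L b := by
    intro u hu b b' hbb hπ
    have h01 : (0:ℝ) < 1 - u := by linarith [hu.2]
    have h1 : (b' - b) * (1 - u) ≤ Phi π L b - Phi π L b' := by
      have := phi_sub_ge π L hLmeas hL hbb
      nlinarith
    have h2 : b' - b ≤ (1-u)⁻¹ * (Phi π L b - Phi π L b') := by
      have h3 : (1-u)⁻¹ * ((b' - b) * (1 - u)) ≤ (1-u)⁻¹ * (Phi π L b - Phi π L b') :=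
        mul_le_mul_of_nonneg_left h1 (by positivity)
      have h4 : (1-u)⁻¹ * ((b' - b) * (1 - u)) = b' - b := by field_simp
      linarith
    have h5 : b' - b ≤ (1-u)⁻¹ * Phi π L b - (1-u)⁻¹ * Phi π L b' := by
      rw [← mul_sub]; exact h2
    linarith
  have hbddb : ∀ u ∈ Ico (0:ℝ) 1,
      BddBelow (range fun b : ℝ => b + (1 - u)⁻¹ * ∫ ω, max (L ω - b) 0 ∂π) := by
    intro u hu
    refine ⟨EL, ?_⟩
    rintro x ⟨b, rfl⟩
    exact g_ge u hu b
  have hESle : ∀ u ∈ Ico (0:ℝ) 1, ∀ b : ℝ, ES u ≤ b + (1-u)⁻¹ * Phi π L b := by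
    intro u hu b
    rw [hES u]
    exact csInf_le (hbddb u hu) ⟨b, rfl⟩
  have hESge : ∀ u ∈ Ico (0:ℝ) 1, EL ≤ ES u := by
    intro u hu
    rw [hES u]
    refine le_csInf (range_nonempty _) ?_
    rintro x ⟨b, rfl⟩
    exact g_ge u hu b
  have hES0 : ES 0 = EL := by
    apply le_antisymm
    · have ht : Tendsto (fun n : ℕ => (-(n:ℝ)) + (1-(0:ℝ))⁻¹ * Phi π L (-(n:ℝ))) atTop
          (𝓝 EL) := by
        have h := phi_add_tendsto' π L hL
        refine Tendsto.congr (fun n => ?_) h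
        show (-(n:ℝ)) + Phi π L (-(n:ℝ)) = -(n:ℝ) + (1-(0:ℝ))⁻¹ * Phi π L (-(n:ℝ))
        norm_num
      apply ge_of_tendsto ht
      filter_upwards with n
      exact hESle 0 ⟨le_rfl, one_pos⟩ _
    · exact hESge 0 ⟨le_rfl, one_pos⟩
  have hGmin : ∀ u ∈ Ioo (0:ℝ) 1, ∀ b : ℝ,
      q u + (1-u)⁻¹ * Phi π L (q u) ≤ b + (1-u)⁻¹ * Phi π L b := by
    intro u hu b
    have hu' : u ∈ Ico (0:ℝ) 1 := ⟨hu.1.le, hu.2⟩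
    rcases le_total b (q u) with h | h
    · exact gB u hu' b (q u) h (qtl_ge_ge π L hLmeas hu.1 hu.2)
    · exact gA u hu' (q u) b h (qtl_gt_le π L hLmeas hu.1 hu.2)
  have hESeq : ∀ u ∈ Ioo (0:ℝ) 1, ES u = q u + (1-u)⁻¹ * Phi π L (q u) := by
    intro u hu
    have hu' : u ∈ Ico (0:ℝ) 1 := ⟨hu.1.le, hu.2⟩
    apply le_antisymm (hESle u hu' _)
    rw [hES u]
    refine le_csInf (range_nonempty _) ?_
    rintro x ⟨b, rfl⟩
    exact hGmin u hu b
  have hbetween : ∀ u ∈ Ioo (0:ℝ) 1, ∀ b b' : ℝ,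
      (q u ≤ b ∧ b ≤ b') ∨ (b' ≤ b ∧ b ≤ q u) →
      b + (1-u)⁻¹ * Phi π L b ≤ b' + (1-u)⁻¹ * Phi π L b' := by
    intro u hu b b' hcase
    have hu' : u ∈ Ico (0:ℝ) 1 := ⟨hu.1.le, hu.2⟩
    rcases hcase with ⟨h1, h2⟩ | ⟨h1, h2⟩
    · apply gA u hu' b b' h2
      calc (π {ω | b < L ω}).toReal ≤ (π {ω | q u < L ω}).toReal := by
            apply ENNReal.toReal_mono (measure_ne_top _ _)
            apply measure_mono
            intro ω hω
            simp only [mem_setOf_eq] at *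
            exact lt_of_le_of_lt h1 hω
        _ ≤ 1 - u := qtl_gt_le π L hLmeas hu.1 hu.2
    · apply gB u hu' b' b h1
      calc 1 - u ≤ (π {ω | q u ≤ L ω}).toReal := qtl_ge_ge π L hLmeas hu.1 hu.2
        _ ≤ (π {ω | b ≤ L ω}).toReal := by
            apply ENNReal.toReal_mono (measure_ne_top _ _)
            apply measure_mono
            intro ω hω
            simp only [mem_setOf_eq] at *
            exact le_trans h2 hω
  set B : ℕ → ℝ → ℝ := fun n u =>
    if u ≤ 0 then -((n:ℝ)+1) else if 1 ≤ u then ((n:ℝ)+1)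
    else max (-((n:ℝ)+1)) (min ((n:ℝ)+1) (q u)) with hBdef
  have hBmono : ∀ n, Monotone (B n) := by
    intro n x y hxy
    simp only [hBdef]
    rcases le_or_gt x 0 with hx | hx
    · rw [if_pos hx]
      rcases le_or_gt y 0 with hy | hy
      · rw [if_pos hy]
      · rw [if_neg (not_le.mpr hy)]
        rcases le_or_gt 1 y with hy1 | hy1
        · rw [if_pos hy1]
          have := Nat.cast_nonneg (α := ℝ) n
          linarith
        · rw [if_neg (not_le.mpr hy1)]
          exact le_max_left _ _
    · rw [if_neg (not_le.mpr hx), if_neg (not_le.mpr (lt_of_lt_of_le hx hxy))]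
      rcases le_or_gt 1 x with hx1 | hx1
      · rw [if_pos hx1, if_pos (le_trans hx1 hxy)]
      · rw [if_neg (not_le.mpr hx1)]
        rcases le_or_gt 1 y with hy1 | hy1
        · rw [if_pos hy1]
          apply max_le
          · have := Nat.cast_nonneg (α := ℝ) n
            linarith
          · exact min_le_left _ _
        · rw [if_neg (not_le.mpr hy1)]
          apply max_le_max le_rfl
          exact min_le_min le_rfl (qtl_mono π L hLmeas hx hxy hy1)
  have hBmeas : ∀ n, Measurable (B n) := fun n => (hBmono n).measurable
  have hBbdd : ∀ n, ∀ u, |B n u| ≤ (n:ℝ)+1 := by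
    intro n u
    have hn : (0:ℝ) ≤ (n:ℝ)+1 := by positivity
    simp only [hBdef]
    split_ifs with h1 h2
    · rw [abs_neg, abs_of_nonneg hn]
    · rw [abs_of_nonneg hn]
    · rw [abs_le]
      refine ⟨le_max_left _ _, max_le (by linarith) (min_le_left _ _)⟩
  have haeIco : ∀ᵐ u ∂Γ, u ∈ Ico (0:ℝ) 1 := by
    rw [ae_iff]
    exact hΓ_supp
  have hbase : Integrable ((Ico (0:ℝ) 1).indicator fun u => (1-u)⁻¹) Γ := by
    constructor
    · exact (((measurable_const.sub measurable_id).inv).indicator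
        measurableSet_Ico).aestronglyMeasurable
    · rw [hasFiniteIntegral_iff_ofReal]
      · have heq : (fun u => ENNReal.ofReal ((Ico (0:ℝ) 1).indicator (fun u => (1-u)⁻¹) u))
            = (Ico (0:ℝ) 1).indicator fun u => ENNReal.ofReal ((1-u)⁻¹) := by
          funext u
          by_cases hu : u ∈ Ico (0:ℝ) 1
          · rw [indicator_of_mem hu, indicator_of_mem hu]
          · rw [indicator_of_notMem hu, indicator_of_notMem hu, ENNReal.ofReal_zero]
        rw [heq, lintegral_indicator measurableSet_Ico]
        calc ∫⁻ u in Ico (0:ℝ) 1, ENNReal.ofReal ((1-u)⁻¹) ∂Γ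
            ≤ 1 + ENNReal.ofReal M :=
              gamma_inv_le Γ hσ_nonneg hσ_mono hM hσ_one hΓ_supp hΓ_cdf
          _ < ⊤ := by
              apply ENNReal.add_lt_top.mpr
              exact ⟨ENNReal.one_lt_top, ENNReal.ofReal_lt_top⟩
      · filter_upwards with u
        simp only [Pi.zero_apply]
        by_cases hu : u ∈ Ico (0:ℝ) 1
        · rw [indicator_of_mem hu]
          exact (hinv_pos u hu).le
        · rw [indicator_of_notMem hu]
  have hphic : Continuous (Phi π L) := phi_cont π L hLmeas hL
  have int_g : ∀ (β : ℝ → ℝ) (Mb : ℝ), Measurable β → (∀ u, |β u| ≤ Mb) →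
      Integrable (fun u => β u + (1-u)⁻¹ * Phi π L (β u)) Γ := by
    intro β Mb hβm hβb
    have hmeas : Measurable fun u => β u + (1-u)⁻¹ * Phi π L (β u) :=
      hβm.add (((measurable_const.sub measurable_id).inv).mul (hphic.measurable.comp hβm))
    apply Integrable.mono'
      ((integrable_const Mb).add (hbase.const_mul (Phi π L (-Mb))))
      hmeas.aestronglyMeasurable
    filter_upwards [haeIco] with u hu
    have hiu : (Ico (0:ℝ) 1).indicator (fun u => (1-u)⁻¹) u = (1-u)⁻¹ := indicator_of_mem hu _
    rw [Real.norm_eq_abs]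
    have h1 : |β u| ≤ Mb := hβb u
    have h2 : Phi π L (β u) ≤ Phi π L (-Mb) := by
      apply phi_anti π L hL
      rcases abs_le.mp h1 with ⟨ha, _⟩
      linarith
    have h3 : (0:ℝ) ≤ (1-u)⁻¹ := (hinv_pos u hu).le
    have h4 : |(1-u)⁻¹ * Phi π L (β u)| = (1-u)⁻¹ * Phi π L (β u) :=
      abs_of_nonneg (mul_nonneg h3 (phi_nonneg π L _))
    calc |β u + (1-u)⁻¹ * Phi π L (β u)|
        ≤ |β u| + |(1-u)⁻¹ * Phi π L (β u)| := abs_add_le _ _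
      _ ≤ Mb + (1-u)⁻¹ * Phi π L (-Mb) := by
          rw [h4]
          exact add_le_add h1 (mul_le_mul_of_nonneg_left h2 h3)
      _ = Mb + Phi π L (-Mb) * ((Ico (0:ℝ) 1).indicator (fun u => (1-u)⁻¹) u) := by
          rw [hiu]; ring
  set qI := (Ioo (0:ℝ) 1).indicator q with hqIdef
  have hqImeas : Measurable qI := by
    have hlim2 : Tendsto (fun n : ℕ => (Ioo (0:ℝ) 1).indicator (B n)) atTop (𝓝 qI) := by
      rw [tendsto_pi_nhds]
      intro u
      by_cases hu : u ∈ Ioo (0:ℝ) 1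
      · have hev : ∀ᶠ (n:ℕ) in atTop, (Ioo (0:ℝ) 1).indicator (B n) u = qI u := by
          obtain ⟨N, hN⟩ := exists_nat_ge |q u|
          filter_upwards [eventually_ge_atTop N] with n hn
          rw [indicator_of_mem hu, hqIdef, indicator_of_mem hu]
          simp only [hBdef]
          rw [if_neg (not_le.mpr hu.1), if_neg (not_le.mpr hu.2)]
          have h1 : |q u| ≤ (n:ℝ) := le_trans hN (by exact_mod_cast hn)
          rcases abs_le.mp h1 with ⟨ha, hb⟩
          rw [min_eq_right (by linarith), max_eq_right (by linarith)]
        exact Tendsto.congr' (hev.mono fun n h => h.symm) tendsto_const_nhds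
      · have hq0 : qI u = 0 := indicator_of_notMem hu _
        rw [hq0]
        exact Tendsto.congr (fun n => (indicator_of_notMem hu (B n)).symm) tendsto_const_nhds
    exact measurable_of_tendsto_metrizable' atTop
      (fun n => (hBmeas n).indicator measurableSet_Ioo) hlim2
  set ESm : ℝ → ℝ := fun u =>
    if u ∈ Ioo (0:ℝ) 1 then qI u + (1-u)⁻¹ * Phi π L (qI u) else EL with hESmdef
  have hESmmeas : Measurable ESm := by
    apply Measurable.ite measurableSet_Ioo
    · exact hqImeas.add
        (((measurable_const.sub measurable_id).inv).mul (hphic.measurable.comp hqImeas))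
    · exact measurable_const
  have hESm_Ioo : ∀ u ∈ Ioo (0:ℝ) 1, ESm u = q u + (1-u)⁻¹ * Phi π L (q u) := by
    intro u hu
    simp only [hESmdef]
    rw [if_pos hu, show qI u = q u from indicator_of_mem hu _]
  have hESm_out : ∀ u, u ∉ Ioo (0:ℝ) 1 → ESm u = EL := by
    intro u hu
    simp only [hESmdef]
    rw [if_neg hu]
  have hESm_eq_ae : ES =ᵐ[Γ] ESm := by
    filter_upwards [haeIco] with u hu
    by_cases hu2 : u ∈ Ioo (0:ℝ) 1
    · rw [hESm_Ioo u hu2, hESeq u hu2]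
    · have hu0 : u = 0 := by
        rcases hu with ⟨h1, h2⟩
        by_contra hc
        exact hu2 ⟨lt_of_le_of_ne h1 (Ne.symm hc), h2⟩
      rw [hu0] at hu2 ⊢
      rw [hES0, hESm_out 0 hu2]
  have hESm_lb : ∀ u ∈ Ico (0:ℝ) 1, EL ≤ ESm u := by
    intro u hu
    by_cases hu2 : u ∈ Ioo (0:ℝ) 1
    · rw [hESm_Ioo u hu2]
      exact g_ge u hu _
    · rw [hESm_out u hu2]
  have hESm_ub : ∀ u ∈ Ico (0:ℝ) 1, ∀ b : ℝ, ESm u ≤ b + (1-u)⁻¹ * Phi π L b := by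
    intro u hu b
    by_cases hu2 : u ∈ Ioo (0:ℝ) 1
    · rw [hESm_Ioo u hu2]
      exact hGmin u hu2 b
    · rw [hESm_out u hu2]
      exact g_ge u hu b
  have hG0int : Integrable (fun u => B 0 u + (1-u)⁻¹ * Phi π L (B 0 u)) Γ :=
    int_g (B 0) (((0:ℕ):ℝ)+1) (hBmeas 0) (hBbdd 0)
  have hDom : Integrable (fun u => |EL| + |B 0 u + (1-u)⁻¹ * Phi π L (B 0 u)|) Γ :=
    (integrable_const _).add hG0int.abs
  have hESmint : Integrable ESm Γ := by
    apply Integrable.mono' hDom hESmmeas.aestronglyMeasurable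
    filter_upwards [haeIco] with u hu
    rw [Real.norm_eq_abs]
    have h1 : EL ≤ ESm u := hESm_lb u hu
    have h2 : ESm u ≤ B 0 u + (1-u)⁻¹ * Phi π L (B 0 u) := hESm_ub u hu _
    have h3 := neg_abs_le EL
    have h4 := le_abs_self (B 0 u + (1-u)⁻¹ * Phi π L (B 0 u))
    have h5 := abs_nonneg (B 0 u + (1-u)⁻¹ * Phi π L (B 0 u))
    have h6 := abs_nonneg EL
    rw [abs_le]
    constructor <;> linarith
  have hlow : ∀ r ∈ {r : ℝ | ∃ β : ℝ → ℝ, Measurable β ∧ (∃ M : ℝ, ∀ u, |β u| ≤ M) ∧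
      r = ∫ u, (β u + (1 - u)⁻¹ * ∫ ω, max (L ω - β u) 0 ∂π) ∂Γ},
      (∫ u, ESm u ∂Γ) ≤ r := by
    rintro r ⟨β, hβm, ⟨Mb, hMb⟩, rfl⟩
    have hint : Integrable (fun u => β u + (1-u)⁻¹ * Phi π L (β u)) Γ := int_g β Mb hβm hMb
    refine integral_mono_ae hESmint hint ?_
    filter_upwards [haeIco] with u hu
    exact hESm_ub u hu (β u)
  have hSbdd : BddBelow {r : ℝ | ∃ β : ℝ → ℝ, Measurable β ∧ (∃ M : ℝ, ∀ u, |β u| ≤ M) ∧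
      r = ∫ u, (β u + (1 - u)⁻¹ * ∫ ω, max (L ω - β u) 0 ∂π) ∂Γ} := ⟨∫ u, ESm u ∂Γ, hlow⟩
  have hSne : Set.Nonempty {r : ℝ | ∃ β : ℝ → ℝ, Measurable β ∧ (∃ M : ℝ, ∀ u, |β u| ≤ M) ∧
      r = ∫ u, (β u + (1 - u)⁻¹ * ∫ ω, max (L ω - β u) 0 ∂π) ∂Γ} :=
    ⟨_, ⟨fun _ => 0, measurable_const, ⟨0, fun u => by simp⟩, rfl⟩⟩
  have hchain : ∀ u ∈ Ico (0:ℝ) 1, ∀ m n : ℕ, m ≤ n →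
      B n u + (1-u)⁻¹ * Phi π L (B n u) ≤ B m u + (1-u)⁻¹ * Phi π L (B m u) := by
    intro u hu m n hmn
    have hmn' : (m:ℝ) + 1 ≤ (n:ℝ) + 1 := by
      have : (m:ℝ) ≤ (n:ℝ) := by exact_mod_cast hmn
      linarith
    have hm0 : (0:ℝ) ≤ (m:ℝ) + 1 := by positivity
    have hn0 : (0:ℝ) ≤ (n:ℝ) + 1 := by positivity
    by_cases hu2 : u ∈ Ioo (0:ℝ) 1
    · have hBu : ∀ k : ℕ, B k u = max (-((k:ℝ)+1)) (min ((k:ℝ)+1) (q u)) := by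
        intro k
        simp only [hBdef]
        rw [if_neg (not_le.mpr hu2.1), if_neg (not_le.mpr hu2.2)]
      rcases le_total (q u) (-((m:ℝ)+1)) with hq1 | hq1
      · apply hbetween u hu2
        left
        constructor
        · rw [hBu n, min_eq_right (by linarith : q u ≤ (n:ℝ)+1)]
          exact le_max_right _ _
        · rw [hBu n, hBu m]
          rw [min_eq_right (by linarith : q u ≤ (m:ℝ)+1),
            max_eq_left hq1]
          exact max_le (by linarith) (le_trans (min_le_right _ _) hq1)
      · rcases le_total ((m:ℝ)+1) (q u) with hq2 | hq2
        · apply hbetween u hu2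
          right
          constructor
          · rw [hBu n, hBu m]
            rw [min_eq_left hq2, max_eq_right (by linarith)]
            refine le_max_of_le_right ?_
            exact le_min hmn' hq2
          · rw [hBu n]
            exact max_le (by linarith) (min_le_right _ _)
        · have hBn : B n u = q u := by
            rw [hBu n]
            rw [min_eq_right (by linarith), max_eq_right (by linarith)]
          have hBm : B m u = q u := by
            rw [hBu m]
            rw [min_eq_right hq2, max_eq_right hq1]
          rw [hBn, hBm]
    · have hu0 : u = 0 := by
        rcases hu with ⟨h1, h2⟩
        by_contra hc
        exact hu2 ⟨lt_of_le_of_ne h1 (Ne.symm hc), h2⟩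
      have hB0 : ∀ k : ℕ, B k u = -((k:ℝ)+1) := by
        intro k
        simp only [hBdef]
        rw [if_pos (le_of_eq hu0)]
      apply gA u hu
      · rw [hB0 n, hB0 m]
        linarith
      · calc (π {ω | B n u < L ω}).toReal ≤ 1 := meas_toReal_le_one π _
          _ = 1 - u := by rw [hu0]; ring
  have hlim : ∀ᵐ u ∂Γ, Tendsto (fun n : ℕ => B n u + (1-u)⁻¹ * Phi π L (B n u)) atTop
      (𝓝 (ESm u)) := by
    filter_upwards [haeIco] with u hu
    by_cases hu2 : u ∈ Ioo (0:ℝ) 1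
    · have hev : ∀ᶠ (n:ℕ) in atTop, B n u + (1-u)⁻¹ * Phi π L (B n u)
          = q u + (1-u)⁻¹ * Phi π L (q u) := by
        obtain ⟨N, hN⟩ := exists_nat_ge |q u|
        filter_upwards [eventually_ge_atTop N] with n hn
        have h1 : |q u| ≤ (n:ℝ) := le_trans hN (by exact_mod_cast hn)
        rcases abs_le.mp h1 with ⟨ha, hb⟩
        have hB : B n u = q u := by
          simp only [hBdef]
          rw [if_neg (not_le.mpr hu2.1), if_neg (not_le.mpr hu2.2)]
          rw [min_eq_right (by linarith), max_eq_right (by linarith)]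
        rw [hB]
      rw [hESm_Ioo u hu2]
      exact Tendsto.congr' (hev.mono fun n h => h.symm) tendsto_const_nhds
    · have hu0 : u = 0 := by
        rcases hu with ⟨h1, h2⟩
        by_contra hc
        exact hu2 ⟨lt_of_le_of_ne h1 (Ne.symm hc), h2⟩
      rw [hu0] at hu2 ⊢
      rw [hESm_out 0 hu2]
      have ht := (phi_add_tendsto' π L hL).comp (tendsto_add_atTop_nat 1)
      refine Tendsto.congr (fun n => ?_) ht
      have hB0 : B n (0:ℝ) = -((n:ℝ)+1) := by
        simp only [hBdef]
        rw [if_pos le_rfl]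
      have hcast : -((((n+1):ℕ)):ℝ) = -((n:ℝ)+1) := by push_cast; ring
      show -((((n+1):ℕ)):ℝ) + Phi π L (-((((n+1):ℕ)):ℝ))
          = B n 0 + (1-(0:ℝ))⁻¹ * Phi π L (B n 0)
      rw [hcast, hB0]
      norm_num
  have htends : Tendsto (fun n : ℕ => ∫ u, (B n u + (1-u)⁻¹ * Phi π L (B n u)) ∂Γ) atTop
      (𝓝 (∫ u, ESm u ∂Γ)) := by
    apply tendsto_integral_of_dominated_convergence
      (fun u => |EL| + |B 0 u + (1-u)⁻¹ * Phi π L (B 0 u)|)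
      (fun n => (int_g (B n) ((n:ℝ)+1) (hBmeas n) (hBbdd n)).aestronglyMeasurable)
      hDom
      ?_ hlim
    intro n
    filter_upwards [haeIco] with u hu
    rw [Real.norm_eq_abs]
    have h1 : EL ≤ B n u + (1-u)⁻¹ * Phi π L (B n u) := g_ge u hu _
    have h2 : B n u + (1-u)⁻¹ * Phi π L (B n u)
        ≤ B 0 u + (1-u)⁻¹ * Phi π L (B 0 u) := hchain u hu 0 n (Nat.zero_le n)
    have h3 := neg_abs_le EL
    have h4 := le_abs_self (B 0 u + (1-u)⁻¹ * Phi π L (B 0 u))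
    have h5 := abs_nonneg (B 0 u + (1-u)⁻¹ * Phi π L (B 0 u))
    have h6 := abs_nonneg EL
    rw [abs_le]
    constructor <;> linarith
  have hupper : sInf {r : ℝ | ∃ β : ℝ → ℝ, Measurable β ∧ (∃ M : ℝ, ∀ u, |β u| ≤ M) ∧
      r = ∫ u, (β u + (1 - u)⁻¹ * ∫ ω, max (L ω - β u) 0 ∂π) ∂Γ} ≤ ∫ u, ESm u ∂Γ := by
    apply ge_of_tendsto htends
    filter_upwards with n
    apply csInf_le hSbdd
    exact ⟨B n, hBmeas n, ⟨(n:ℝ)+1, hBbdd n⟩, rfl⟩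
  have hmain : sInf {r : ℝ | ∃ β : ℝ → ℝ, Measurable β ∧ (∃ M : ℝ, ∀ u, |β u| ≤ M) ∧
      r = ∫ u, (β u + (1 - u)⁻¹ * ∫ ω, max (L ω - β u) 0 ∂π) ∂Γ} = ∫ u, ESm u ∂Γ :=
    le_antisymm hupper (le_csInf hSne hlow)
  rw [hmain]
  have hsplit := integral_add_compl (measurableSet_singleton (0:ℝ)) hESmint (μ := Γ)
  rw [← hsplit]
  congr 1
  · rw [Measure.restrict_singleton, integral_smul_measure, integral_dirac]
    rw [hESm_out 0 (by simp)]
    rw [smul_eq_mul]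
  · apply integral_congr_ae
    exact ae_restrict_of_ae hESm_eq_ae.symm
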